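/- For partitions λ and μ of n, the Kostka number K_{λμ} is positive (i.e., there exists a semistandard λ-tableau of content μ) if and only if λ dominates μ. -/

import Mathlib

/-- A composition of `n`: a finitely-supported sequence of naturals summing to `n`. -/
def IsComposition (n : ℕ) (μ : ℕ → ℕ) : Prop :=
  (Function.support μ).Finite ∧ ∑ᶠ i, μ i = n

/-- A partition of `n`: a weakly decreasing composition of `n`. -/
def IsPartition (n : ℕ) (μ : ℕ → ℕ) : Prop :=
  Antitone μ ∧ IsComposition n μ

/-- `μ` dominates `ν`: every partial sum of `μ` is at least that of `ν`. -/
def Dominates (μ ν : ℕ → ℕ) : Prop :=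
  ∀ r, ∑ i ∈ Finset.range r, ν i ≤ ∑ i ∈ Finset.range r, μ i

/-- `T` is a semistandard tableau of shape `p` (0-indexed rows/columns/entries):
rows weakly increase, columns strictly increase, and `T` is zero outside the diagram. -/
def IsSSYT (p : ℕ → ℕ) (T : ℕ → ℕ → ℕ) : Prop :=
  (∀ r c₁ c₂, c₁ ≤ c₂ → c₂ < p r → T r c₁ ≤ T r c₂) ∧
  (∀ r₁ r₂ c, r₁ < r₂ → c < p r₂ → T r₁ c < T r₂ c) ∧
  (∀ r c, p r ≤ c → T r c = 0)

/-- The number of entries of `T` equal to `i` within the diagram of `p`. -/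
noncomputable def contentOf (p : ℕ → ℕ) (T : ℕ → ℕ → ℕ) (i : ℕ) : ℕ :=
  {q : ℕ × ℕ | q.2 < p q.1 ∧ T q.1 q.2 = i}.ncard

/-- The Kostka number: the number of semistandard tableaux of shape `p` and content `μ`. -/
noncomputable def Kostka (p μ : ℕ → ℕ) : ℕ :=
  {T : ℕ → ℕ → ℕ | IsSSYT p T ∧ ∀ i, contentOf p T i = μ i}.ncard

namespace KostkaAux

/-- The diagram of `p` inside the `N × B` box, as a Finset. -/
def kdiag (p : ℕ → ℕ) (N B : ℕ) : Finset (ℕ × ℕ) :=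
  (Finset.range N ×ˢ Finset.range B).filter (fun q => q.2 < p q.1)

lemma mem_kdiag {p : ℕ → ℕ} {N B : ℕ} {q : ℕ × ℕ} :
    q ∈ kdiag p N B ↔ q.1 < N ∧ q.2 < B ∧ q.2 < p q.1 := by
  simp [kdiag, and_assoc]

lemma kdiag_filter_card (p : ℕ → ℕ) (N B : ℕ) (hB : ∀ r, p r ≤ B)
    (P : ℕ × ℕ → Prop) [DecidablePred P] :
    ((kdiag p N B).filter P).card
      = ∑ r ∈ Finset.range N, ((Finset.range (p r)).filter (fun c => P (r, c))).card := by
  have he : (kdiag p N B).filter P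
      = (Finset.range N).biUnion (fun r =>
          ((Finset.range (p r)).filter (fun c => P (r, c))).map
            ⟨Prod.mk r, fun a b h => by simpa using h⟩) := by
    ext ⟨a, b⟩
    simp only [Finset.mem_filter, mem_kdiag, Finset.mem_biUnion, Finset.mem_range,
      Finset.mem_map, Function.Embedding.coeFn_mk, Prod.mk.injEq, DFunLike.coe]
    constructor
    · rintro ⟨⟨h1, h2, h3⟩, h4⟩
      exact ⟨a, h1, b, ⟨h3, h4⟩, rfl, rfl⟩
    · rintro ⟨r, hr, c, ⟨hc1, hc2⟩, rfl, rfl⟩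
      exact ⟨⟨hr, lt_of_lt_of_le hc1 (hB _), hc1⟩, hc2⟩
  rw [he, Finset.card_biUnion]
  · simp
  · intro x hx y hy hxy
    simp only [Finset.disjoint_left]
    rintro ⟨a, b⟩ ha hb
    simp only [Finset.mem_map, Function.Embedding.coeFn_mk, Prod.mk.injEq, DFunLike.coe] at ha hb
    obtain ⟨c, -, rfl, -⟩ := ha
    obtain ⟨c', -, h, -⟩ := hb
    exact hxy h.symm

lemma setOf_eq_kdiag_filter (p : ℕ → ℕ) (N B : ℕ) (hN : ∀ r, N ≤ r → p r = 0)
    (hB : ∀ r, p r ≤ B) (P : ℕ × ℕ → Prop) [DecidablePred P] :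
    {q : ℕ × ℕ | q.2 < p q.1 ∧ P q} = ↑((kdiag p N B).filter P) := by
  ext ⟨a, b⟩
  simp only [Set.mem_setOf_eq, Finset.coe_filter, mem_kdiag, Set.mem_setOf_eq]
  constructor
  · rintro ⟨h1, h2⟩
    refine ⟨⟨?_, lt_of_lt_of_le h1 (hB a), h1⟩, h2⟩
    by_contra h
    rw [hN a (le_of_not_gt h)] at h1; omega
  · rintro ⟨⟨-, -, h3⟩, h4⟩; exact ⟨h3, h4⟩

lemma ncard_setOf (p : ℕ → ℕ) (N B : ℕ) (hN : ∀ r, N ≤ r → p r = 0)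
    (hB : ∀ r, p r ≤ B) (P : ℕ × ℕ → Prop) [DecidablePred P] :
    {q : ℕ × ℕ | q.2 < p q.1 ∧ P q}.ncard
      = ∑ r ∈ Finset.range N, ((Finset.range (p r)).filter (fun c => P (r, c))).card := by
  rw [setOf_eq_kdiag_filter p N B hN hB P, Set.ncard_coe_finset,
    kdiag_filter_card p N B hB P]

lemma setOf_finite (p : ℕ → ℕ) (N B : ℕ) (hN : ∀ r, N ≤ r → p r = 0)
    (hB : ∀ r, p r ≤ B) (P : ℕ × ℕ → Prop) [DecidablePred P] :
    {q : ℕ × ℕ | q.2 < p q.1 ∧ P q}.Finite := by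
  rw [setOf_eq_kdiag_filter p N B hN hB P]; exact Finset.finite_toSet _

/-! Partition basics -/

lemma partial_le {n : ℕ} {p : ℕ → ℕ} (h : IsComposition n p) (s : Finset ℕ) :
    ∑ i ∈ s, p i ≤ n := by
  obtain ⟨hfin, hsum⟩ := h
  have := finsum_eq_finset_sum_of_support_subset p
    (s := hfin.toFinset ∪ s) (by
      intro x hx
      simp only [Finset.coe_union, Set.mem_union, Set.Finite.coe_toFinset]
      exact Or.inl hx)
  rw [hsum] at this
  rw [this]
  exact Finset.sum_le_sum_of_subset (Finset.subset_union_right)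

lemma partition_bound {n : ℕ} {p : ℕ → ℕ} (h : IsPartition n p) (r : ℕ) : p r ≤ n := by
  simpa using partial_le h.2 {r}

lemma partition_pos_lt {n : ℕ} {p : ℕ → ℕ} (h : IsPartition n p) {r : ℕ}
    (hr : 0 < p r) : r < n := by
  by_contra hc
  push_neg at hc
  have : ∀ i ∈ Finset.range (r + 1), 1 ≤ p i := by
    intro i hi
    simp only [Finset.mem_range] at hi
    exact le_trans hr (h.1 (by omega))
  have h1 : r + 1 ≤ ∑ i ∈ Finset.range (r + 1), p i := by
    calc r + 1 = ∑ _i ∈ Finset.range (r + 1), 1 := by simp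
    _ ≤ _ := Finset.sum_le_sum this
  have := partial_le h.2 (Finset.range (r + 1))
  omega

lemma partition_vanish {n : ℕ} {p : ℕ → ℕ} (h : IsPartition n p) {r : ℕ}
    (hr : n ≤ r) : p r = 0 := by
  by_contra hc
  exact absurd (partition_pos_lt h (Nat.pos_of_ne_zero hc)) (by omega)

lemma sum_range_eq {n : ℕ} {p : ℕ → ℕ} (h : IsPartition n p) {N : ℕ} (hN : n ≤ N) :
    ∑ i ∈ Finset.range N, p i = n := by
  rw [← h.2.2]
  exact (finsum_eq_finset_sum_of_support_subset p (by
    intro x hx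
    simp only [Function.mem_support] at hx
    simp only [Finset.coe_range, Set.mem_Iio]
    exact lt_of_lt_of_le (partition_pos_lt h (Nat.pos_of_ne_zero hx)) hN)).symm


lemma entry_ge_row {p : ℕ → ℕ} {T : ℕ → ℕ → ℕ} (hp : Antitone p) (hT : IsSSYT p T) :
    ∀ r c, c < p r → r ≤ T r c := by
  intro r
  induction r with
  | zero => intro c _; exact Nat.zero_le _
  | succ r ih =>
    intro c hc
    have h1 := hT.2.1 r (r + 1) c (Nat.lt_succ_self r) hc
    have h2 := ih c (lt_of_lt_of_le hc (hp (Nat.le_succ r)))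
    omega

lemma contentOf_eq_card {n : ℕ} {lam : ℕ → ℕ} (hlam : IsPartition n lam)
    (T : ℕ → ℕ → ℕ) (i : ℕ) :
    contentOf lam T i = ((kdiag lam n n).filter (fun q => T q.1 q.2 = i)).card := by
  rw [contentOf, setOf_eq_kdiag_filter lam n n (fun r hr => partition_vanish hlam hr)
    (fun r => partition_bound hlam r), Set.ncard_coe_finset]

lemma dominates_of_ssyt {n : ℕ} {lam μ T : _} (hlam : IsPartition n lam)
    (hμ : IsPartition n μ) (hT : IsSSYT lam T) (hc : ∀ i, contentOf lam T i = μ i) :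
    Dominates lam μ := by
  intro R
  have step1 : ∑ i ∈ Finset.range R, μ i
      = ((kdiag lam n n).filter (fun q => T q.1 q.2 < R)).card := by
    rw [Finset.card_eq_sum_card_fiberwise (f := fun q => T q.1 q.2)
      (t := Finset.range R) (fun q hq => by
        simp only [Finset.mem_coe, Finset.mem_filter] at hq
        exact Finset.mem_range.2 hq.2)]
    refine Finset.sum_congr rfl (fun i hi => ?_)
    rw [← hc i, contentOf_eq_card hlam, Finset.filter_filter]
    simp only [Finset.mem_range] at hi
    congr 1
    ext q
    simp only [Finset.mem_filter]
    constructor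
    · rintro ⟨h1, rfl⟩; exact ⟨h1, hi, rfl⟩
    · rintro ⟨h1, -, rfl⟩; exact ⟨h1, rfl⟩
  have step2 : ((kdiag lam n n).filter (fun q => T q.1 q.2 < R)).card
      ≤ ((kdiag lam n n).filter (fun q => q.1 < R)).card := by
    apply Finset.card_le_card
    intro q hq
    simp only [Finset.mem_filter, mem_kdiag] at hq ⊢
    refine ⟨hq.1, ?_⟩
    have := entry_ge_row hlam.1 hT q.1 q.2 hq.1.2.2
    omega
  have step3 : ((kdiag lam n n).filter (fun q => q.1 < R)).card
      ≤ ∑ r ∈ Finset.range R, lam r := by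
    rw [kdiag_filter_card lam n n (fun r => partition_bound hlam r)]
    have : ∀ r ∈ Finset.range n,
        ((Finset.range (lam r)).filter (fun _ => r < R)).card
          = if r < R then lam r else 0 := by
      intro r _
      by_cases h : r < R
      · simp [h]
      · simp [h]
    rw [Finset.sum_congr rfl this, ← Finset.sum_filter]
    have hsub : (Finset.range n).filter (fun r => r < R) ⊆ Finset.range R := by
      intro r hr
      simp only [Finset.mem_filter, Finset.mem_range] at hr ⊢
      exact hr.2
    exact Finset.sum_le_sum_of_subset hsub
  calc ∑ i ∈ Finset.range R, μ i = _ := step1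
    _ ≤ _ := step2
    _ ≤ _ := step3


/-- Telescoping identity for the reduced shape. -/
lemma lamp_partial (lam : ℕ → ℕ) (k : ℕ) (h0 : k ≤ lam 0) (r : ℕ) :
    (∑ s ∈ Finset.range r, (lam s - min k (lam s) + min k (lam (s + 1)))) + k
      = (∑ s ∈ Finset.range r, lam s) + min k (lam r) := by
  induction r with
  | zero => simp [min_eq_left h0]
  | succ r ih =>
    rw [Finset.sum_range_succ, Finset.sum_range_succ]
    have h1 : min k (lam r) ≤ lam r := min_le_right _ _
    omega

theorem exists_ssyt : ∀ n : ℕ, ∀ lam μ : ℕ → ℕ, IsPartition n lam → IsPartition n μ →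
    Dominates lam μ → ∃ T, IsSSYT lam T ∧ ∀ i, contentOf lam T i = μ i := by
  intro n
  induction n using Nat.strong_induction_on with
  | _ n ih =>
  intro lam μ hlam hμ hdom
  by_cases hn : n = 0
  · subst hn
    refine ⟨fun _ _ => 0, ⟨fun _ _ _ _ _ => le_refl _, fun r₁ r₂ c h1 h2 => ?_,
      fun _ _ _ => rfl⟩, fun i => ?_⟩
    · have := partition_bound hlam r₂; omega
    · have hset : {q : ℕ × ℕ | q.2 < lam q.1 ∧ (fun _ _ => 0 : ℕ → ℕ → ℕ) q.1 q.2 = i} = ∅ := by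
        ext q
        have := partition_bound hlam q.1
        simp only [Set.mem_setOf_eq, Set.mem_empty_iff_false, iff_false]
        omega
      rw [contentOf, hset, Set.ncard_empty]
      have := partition_bound hμ i
      omega
  -- n > 0 : find the largest value m in the support of μ
  have hμne : ∃ j, μ j ≠ 0 := by
    by_contra h
    push_neg at h
    have : μ = fun _ => 0 := funext h
    have h2 := hμ.2.2
    rw [this] at h2
    simp at h2
    exact hn h2.symm
  obtain ⟨j₀, hj₀⟩ := hμne
  have hFne : (hμ.2.1.toFinset).Nonempty := ⟨j₀, hμ.2.1.mem_toFinset.2 hj₀⟩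
  set m := hμ.2.1.toFinset.max' hFne with hm_def
  have hm : μ m ≠ 0 := by
    have := hμ.2.1.toFinset.max'_mem hFne
    rwa [Set.Finite.mem_toFinset] at this
  have hmax : ∀ j, m < j → μ j = 0 := by
    intro j hj
    by_contra h
    have : j ∈ hμ.2.1.toFinset := hμ.2.1.mem_toFinset.2 h
    have := hμ.2.1.toFinset.le_max' j this
    omega
  set k := μ m with hk_def
  have hk1 : 1 ≤ k := Nat.pos_of_ne_zero hm
  have hkl0 : k ≤ lam 0 := by
    have h1 := hdom 1
    simp only [Finset.sum_range_one] at h1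
    exact le_trans (hμ.1 (Nat.zero_le m)) h1
  have hkn : k ≤ n := partition_bound hμ m
  have hmn : m < n := partition_pos_lt hμ (Nat.pos_of_ne_zero hm)
  set lam' := fun r => lam r - min k (lam r) + min k (lam (r + 1)) with hlam'_def
  set μ' := fun j => if j = m then 0 else μ j with hμ'_def
  have hlamanti : ∀ (a b : ℕ), a ≤ b → lam b ≤ lam a := fun a b h => hlam.1 h
  have hlam'le : ∀ r, lam' r ≤ lam r := by
    intro r
    have h1 := hlamanti r (r + 1) (Nat.le_succ r)
    simp only [hlam'_def]
    omega
  have hstrip : ∀ r, lam (r + 1) ≤ lam' r := by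
    intro r
    have h1 := hlamanti r (r + 1) (Nat.le_succ r)
    simp only [hlam'_def]
    omega
  have hlam'anti : Antitone lam' := by
    apply antitone_nat_of_succ_le
    intro r
    have h1 := hlamanti r (r + 1) (Nat.le_succ r)
    have h2 := hlamanti (r + 1) (r + 1 + 1) (Nat.le_succ _)
    simp only [hlam'_def]
    omega
  have hlam'0 : ∀ r, n ≤ r → lam' r = 0 := by
    intro r hr
    have := hlam'le r
    have := partition_vanish hlam hr
    omega
  have hlamn0 : lam n = 0 := partition_vanish hlam (le_refl n)
  have hsum_lam' : (∑ s ∈ Finset.range n, lam' s) + k = n := by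
    have := lamp_partial lam k hkl0 n
    rw [sum_range_eq hlam (le_refl n), hlamn0] at this
    simp only [hlam'_def]
    omega
  have hlam'part : IsPartition (n - k) lam' := by
    refine ⟨hlam'anti, ?_, ?_⟩
    · apply Set.Finite.subset (Set.finite_Iio n)
      intro r hr
      simp only [Function.mem_support] at hr
      simp only [Set.mem_Iio]
      by_contra h
      exact hr (hlam'0 r (by omega))
    · rw [finsum_eq_finset_sum_of_support_subset lam' (s := Finset.range n) (by
        intro r hr
        simp only [Function.mem_support] at hr
        simp only [Finset.coe_range, Set.mem_Iio]
        by_contra h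
        exact hr (hlam'0 r (by omega)))]
      omega
  -- partial sums of μ'
  have hμ'partial : ∀ r, m < r →
      (∑ j ∈ Finset.range r, μ' j) + k = ∑ j ∈ Finset.range r, μ j := by
    intro r hr
    have hmem : m ∈ Finset.range r := Finset.mem_range.2 hr
    have e1 := Finset.add_sum_erase (Finset.range r) μ' hmem
    have e2 := Finset.add_sum_erase (Finset.range r) μ hmem
    have e3 : ∑ j ∈ (Finset.range r).erase m, μ' j = ∑ j ∈ (Finset.range r).erase m, μ j := by
      refine Finset.sum_congr rfl (fun j hj => ?_)
      have := Finset.ne_of_mem_erase hj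
      simp only [hμ'_def, if_neg this]
    have e4 : μ' m = 0 := by simp [hμ'_def]
    omega
  have hμ'eq : ∀ r, r ≤ m → ∑ j ∈ Finset.range r, μ' j = ∑ j ∈ Finset.range r, μ j := by
    intro r hr
    refine Finset.sum_congr rfl (fun j hj => ?_)
    simp only [Finset.mem_range] at hj
    simp only [hμ'_def, if_neg (by omega : j ≠ m)]
  have hμ'anti : Antitone μ' := by
    intro a b hab
    simp only [hμ'_def]
    by_cases hb : b = m
    · simp [hb]
    · by_cases ha : a = m
      · have : m < b := by omega
        simp [hb, ha, hmax b this]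
      · simp only [if_neg hb, if_neg ha]
        exact hμ.1 hab
  have hμ'part : IsPartition (n - k) μ' := by
    refine ⟨hμ'anti, ?_, ?_⟩
    · apply Set.Finite.subset hμ.2.1
      intro j hj
      simp only [Function.mem_support, hμ'_def] at hj
      simp only [Function.mem_support]
      intro h
      exact hj (by simp [h])
    · rw [finsum_eq_finset_sum_of_support_subset μ' (s := Finset.range n) (by
        intro j hj
        simp only [Function.mem_support, hμ'_def] at hj
        simp only [Finset.coe_range, Set.mem_Iio]
        by_contra h
        exact hj (by simp [partition_vanish hμ (by omega : n ≤ j)]))]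
      have := hμ'partial n hmn
      rw [sum_range_eq hμ (le_refl n)] at this
      omega
  have hdom' : Dominates lam' μ' := by
    intro r
    have hid := lamp_partial lam k hkl0 r
    by_cases hr : r ≤ m
    · rw [hμ'eq r hr]
      by_cases hkr : k ≤ lam r
      · have := hdom r
        simp only [hlam'_def] at hid ⊢
        omega
      · -- lam r < k ≤ μ r
        have hμr : k ≤ μ r := hμ.1 hr
        have hd := hdom (r + 1)
        rw [Finset.sum_range_succ, Finset.sum_range_succ] at hd
        simp only [hlam'_def] at hid ⊢
        omega
    · have hp := hμ'partial r (by omega)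
      have := hdom r
      simp only [hlam'_def] at hid ⊢
      omega
  obtain ⟨T', hT', hcont'⟩ := ih (n - k) (by omega) lam' μ' hlam'part hμ'part hdom'
  -- entries of T' are < m
  have hlam'B : ∀ r, lam' r ≤ n := fun r => le_trans (hlam'le r) (partition_bound hlam r)
  have hT'lt : ∀ r c, c < lam' r → T' r c < m := by
    intro r c hc
    set v := T' r c with hv
    have hfin : {q : ℕ × ℕ | q.2 < lam' q.1 ∧ T' q.1 q.2 = v}.Finite :=
      setOf_finite lam' n n hlam'0 hlam'B _
    have hpos : 0 < {q : ℕ × ℕ | q.2 < lam' q.1 ∧ T' q.1 q.2 = v}.ncard :=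
      (Set.ncard_pos hfin).2 ⟨(r, c), hc, rfl⟩
    have := hcont' v
    rw [contentOf] at this
    rw [this] at hpos
    simp only [hμ'_def] at hpos
    by_contra h
    push_neg at h
    rcases Nat.lt_or_ge m v with h2 | h2
    · rw [if_neg (by omega), hmax v h2] at hpos; omega
    · have : v = m := le_antisymm h2 h
      rw [if_pos this] at hpos; omega
  set T := fun r c => if c < lam r then (if c < lam' r then T' r c else m) else 0 with hT_def
  refine ⟨T, ⟨?_, ?_, ?_⟩, ?_⟩
  · -- rows weakly increasing
    intro r c₁ c₂ h12 h2
    have h1 : c₁ < lam r := by omega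
    simp only [hT_def, if_pos h1, if_pos h2]
    by_cases hc2 : c₂ < lam' r
    · rw [if_pos (by omega : c₁ < lam' r), if_pos hc2]
      exact hT'.1 r c₁ c₂ h12 hc2
    · rw [if_neg hc2]
      by_cases hc1 : c₁ < lam' r
      · rw [if_pos hc1]
        exact le_of_lt (hT'lt r c₁ hc1)
      · rw [if_neg hc1]
  · -- columns strictly increasing
    intro r₁ r₂ c h12 h2
    have h1 : c < lam r₁ := lt_of_lt_of_le h2 (hlamanti r₁ r₂ (le_of_lt h12))
    simp only [hT_def, if_pos h1, if_pos h2]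
    by_cases hc2 : c < lam' r₂
    · have hc1 : c < lam' r₁ := lt_of_lt_of_le hc2 (hlam'anti (le_of_lt h12))
      rw [if_pos hc1, if_pos hc2]
      exact hT'.2.1 r₁ r₂ c h12 hc2
    · rw [if_neg hc2]
      have hc1 : c < lam' r₁ := by
        have hs := hstrip r₁
        have : lam r₂ ≤ lam (r₁ + 1) := hlamanti (r₁ + 1) r₂ h12
        omega
      rw [if_pos hc1]
      exact hT'lt r₁ c hc1
  · -- zero outside
    intro r c hc
    simp only [hT_def, if_neg (by omega : ¬ c < lam r)]
  · -- content
    intro i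
    rcases Nat.lt_trichotomy i m with him | him | him
    · -- i < m
      have hset : {q : ℕ × ℕ | q.2 < lam q.1 ∧ T q.1 q.2 = i}
          = {q : ℕ × ℕ | q.2 < lam' q.1 ∧ T' q.1 q.2 = i} := by
        ext q
        simp only [Set.mem_setOf_eq, hT_def]
        constructor
        · rintro ⟨h1, h2⟩
          rw [if_pos h1] at h2
          by_cases hq : q.2 < lam' q.1
          · rw [if_pos hq] at h2; exact ⟨hq, h2⟩
          · rw [if_neg hq] at h2; omega
        · rintro ⟨h1, h2⟩
          have h3 : q.2 < lam q.1 := lt_of_lt_of_le h1 (hlam'le q.1)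
          rw [if_pos h3, if_pos h1]
          exact ⟨h3, h2⟩
      rw [contentOf, hset]
      have := hcont' i
      rw [contentOf] at this
      rw [this]
      simp only [hμ'_def, if_neg (by omega : i ≠ m)]
    · -- i = m
      have hset : {q : ℕ × ℕ | q.2 < lam q.1 ∧ T q.1 q.2 = i}
          = {q : ℕ × ℕ | q.2 < lam q.1 ∧ lam' q.1 ≤ q.2} := by
        ext q
        simp only [Set.mem_setOf_eq, hT_def]
        constructor
        · rintro ⟨h1, h2⟩
          rw [if_pos h1] at h2
          refine ⟨h1, ?_⟩
          by_contra hq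
          push_neg at hq
          rw [if_pos hq] at h2
          have := hT'lt q.1 q.2 hq
          omega
        · rintro ⟨h1, h2⟩
          rw [if_pos h1, if_neg (by omega : ¬ q.2 < lam' q.1)]
          exact ⟨h1, him.symm⟩
      rw [contentOf, hset, ncard_setOf lam n n (fun r hr => partition_vanish hlam hr)
        (fun r => partition_bound hlam r)]
      have hterm : ∀ r ∈ Finset.range n,
          ((Finset.range (lam r)).filter (fun c => lam' r ≤ c)).card = lam r - lam' r := by
        intro r _
        have : (Finset.range (lam r)).filter (fun c => lam' r ≤ c) = Finset.Ico (lam' r) (lam r) := by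
          ext c
          simp only [Finset.mem_filter, Finset.mem_range, Finset.mem_Ico]
          omega
        rw [this, Nat.card_Ico]
      rw [Finset.sum_congr rfl hterm]
      have hsplit : ∑ r ∈ Finset.range n, (lam r - lam' r)
          = (∑ r ∈ Finset.range n, lam r) - ∑ r ∈ Finset.range n, lam' r := by
        have : ∑ r ∈ Finset.range n, (lam r - lam' r) + ∑ r ∈ Finset.range n, lam' r
            = ∑ r ∈ Finset.range n, lam r := by
          rw [← Finset.sum_add_distrib]
          refine Finset.sum_congr rfl (fun r _ => ?_)
          have := hlam'le r
          omega
        omega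
      rw [hsplit, sum_range_eq hlam (le_refl n), him]
      omega
    · -- m < i
      have hset : {q : ℕ × ℕ | q.2 < lam q.1 ∧ T q.1 q.2 = i} = ∅ := by
        ext q
        simp only [Set.mem_setOf_eq, Set.mem_empty_iff_false, iff_false]
        rintro ⟨h1, h2⟩
        rw [hT_def] at h2
        simp only [if_pos h1] at h2
        by_cases hq : q.2 < lam' q.1
        · rw [if_pos hq] at h2
          have := hT'lt q.1 q.2 hq
          omega
        · rw [if_neg hq] at h2
          omega
      rw [contentOf, hset, Set.ncard_empty, hmax i him]


lemma entry_lt {n : ℕ} {lam μ : ℕ → ℕ} {T : ℕ → ℕ → ℕ} (hlam : IsPartition n lam)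
    (hμ : IsPartition n μ) (hT : IsSSYT lam T) (hc : ∀ i, contentOf lam T i = μ i) :
    ∀ r c, c < lam r → T r c < n := by
  intro r c hcl
  set v := T r c with hv
  have hfin : {q : ℕ × ℕ | q.2 < lam q.1 ∧ T q.1 q.2 = v}.Finite :=
    setOf_finite lam n n (fun r hr => partition_vanish hlam hr)
      (fun r => partition_bound hlam r) _
  have hpos : 0 < {q : ℕ × ℕ | q.2 < lam q.1 ∧ T q.1 q.2 = v}.ncard :=
    (Set.ncard_pos hfin).2 ⟨(r, c), hcl, rfl⟩
  have := hc v
  rw [contentOf] at this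
  rw [this] at hpos
  exact partition_pos_lt hμ hpos

lemma kostka_set_finite {n : ℕ} {lam μ : ℕ → ℕ} (hlam : IsPartition n lam)
    (hμ : IsPartition n μ) :
    {T : ℕ → ℕ → ℕ | IsSSYT lam T ∧ ∀ i, contentOf lam T i = μ i}.Finite := by
  set D := kdiag lam n n with hD
  set Φ : (↥D → Fin (n + 1)) → (ℕ → ℕ → ℕ) :=
    fun f r c => if h : (r, c) ∈ D then (f ⟨(r, c), h⟩ : ℕ) else 0 with hΦ
  apply Set.Finite.subset (Set.finite_range Φ)
  rintro T ⟨hssyt, hcont⟩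
  have hbd : ∀ q : ℕ × ℕ, q ∈ D → T q.1 q.2 < n + 1 := by
    intro q hq
    rw [hD, mem_kdiag] at hq
    exact Nat.lt_succ_of_lt (entry_lt hlam hμ hssyt hcont q.1 q.2 hq.2.2)
  refine ⟨fun q => ⟨T q.1.1 q.1.2, hbd q.1 q.2⟩, ?_⟩
  funext r c
  simp only [hΦ]
  by_cases h : (r, c) ∈ D
  · rw [dif_pos h]
  · rw [dif_neg h]
    rcases Nat.lt_or_ge c (lam r) with h1 | h1
    · exfalso
      apply h
      rw [hD, mem_kdiag]
      have hr : r < n := partition_pos_lt hlam (by omega)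
      have hc : c < n := lt_of_lt_of_le h1 (partition_bound hlam r)
      exact ⟨hr, hc, h1⟩
    · exact (hssyt.2.2 r c h1).symm


end KostkaAux

theorem kostka_note_stmt9 {n : ℕ} (lam μ : ℕ → ℕ)
    (hlam : IsPartition n lam) (hμ : IsPartition n μ) :
    0 < Kostka lam μ ↔ Dominates lam μ := by
  constructor
  · intro h
    obtain ⟨T, hT, hc⟩ := Set.nonempty_of_ncard_ne_zero (Nat.pos_iff_ne_zero.1 h)
    exact KostkaAux.dominates_of_ssyt hlam hμ hT hc
  · intro hdom
    obtain ⟨T, h1, h2⟩ := KostkaAux.exists_ssyt n lam μ hlam hμ hdom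
    exact (Set.ncard_pos (KostkaAux.kostka_set_finite hlam hμ)).2 ⟨T, h1, h2⟩
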